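/- Matrix trapezoidal Filon quadrature is exact on the linear interpolant: let n be a finite index type, let L be an invertible n×n complex matrix, let Δt > 0, set L̃ = Δt·L, and let G₀, G₁ ∈ ℂⁿ. Define the matrices A = Δt · L̃⁻² (exp(−L̃) + L̃ − 1) and B = Δt · L̃⁻² (1 − L̃·exp(−L̃) − exp(−L̃)), where 1 denotes the identity matrix. Then for every s ∈ ℝ, ∫_{s}^{s+Δt} (exp((s−τ)L)).mulVec ( G₀ + ((τ−s)/Δt) • (G₁ − G₀) ) dτ = A.mulVec G₀ + B.mulVec G₁. -/

import Mathlib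

open MeasureTheory intervalIntegral
open NormedSpace

/-- Matrix trapezoidal Filon quadrature is exact on the linear interpolant. -/
theorem matrix_trapezoidal_filon_exact_on_linear {n : Type*} [Fintype n] [DecidableEq n]
    (L : Matrix n n ℂ) (hL : IsUnit L) (Δt : ℝ) (hΔt : 0 < Δt)
    (G₀ G₁ : n → ℂ)
    (Lt A B : Matrix n n ℂ)
    (hLt : Lt = Δt • L)
    (hA : A = Δt • ((Lt⁻¹) ^ 2 * (NormedSpace.exp (-Lt) + Lt - 1)))
    (hB : B = Δt • ((Lt⁻¹) ^ 2 * (1 - Lt * NormedSpace.exp (-Lt) - NormedSpace.exp (-Lt)))) :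
    ∀ s : ℝ,
      (∫ τ in s..(s + Δt), (NormedSpace.exp ((s - τ) • L)).mulVec
        (G₀ + ((τ - s) / Δt) • (G₁ - G₀)))
      = A.mulVec G₀ + B.mulVec G₁ := by
  intro s
  letI : NormedRing (Matrix n n ℂ) := Matrix.linftyOpNormedRing
  letI : NormedAlgebra ℝ (Matrix n n ℂ) := Matrix.linftyOpNormedAlgebra
  letI : CompleteSpace (Matrix n n ℂ) := FiniteDimensional.complete ℝ _
  have hexp : (exp : Matrix n n ℂ → _) = exp := rfl
  have hdet : IsUnit L.det := (Matrix.isUnit_iff_isUnit_det L).mp hL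
  have hinv : L⁻¹ * L = 1 := Matrix.nonsing_inv_mul L hdet
  set Li := L⁻¹ with hLi
  set d := G₁ - G₀ with hd
  -- mulVec as a continuous linear map in the matrix argument
  let mulV : (n → ℂ) → Matrix n n ℂ →L[ℝ] (n → ℂ) := fun v =>
    LinearMap.toContinuousLinearMap
      { toFun := fun M => M.mulVec v
        map_add' := fun M N => Matrix.add_mulVec M N v
        map_smul' := fun r M => Matrix.smul_mulVec r M v }
  have mulV_apply : ∀ v M, mulV v M = M.mulVec v := fun _ _ => rfl
  set E : ℝ → Matrix n n ℂ := fun τ => exp ((s - τ) • L) with hEdef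
  have hE : ∀ τ : ℝ, HasDerivAt E (-(L * E τ)) τ := by
    intro τ
    have h1 := hasDerivAt_exp_smul_const' (𝕂 := ℝ) L (s - τ)
    have h2 : HasDerivAt (fun τ : ℝ => s - τ) (-1) τ := by
      simpa using (hasDerivAt_id τ).const_sub s
    have := h1.scomp τ h2
    simp [neg_mul, mul_comm] at this
    exact this
  have hEcont : Continuous E :=
    continuous_iff_continuousAt.mpr fun τ => (hE τ).continuousAt
  -- the antiderivative
  set Φ : ℝ → (n → ℂ) := fun τ =>
    mulV G₀ (-(Li * E τ)) + Δt⁻¹ • mulV d (-(((τ - s) • Li + Li ^ 2) * E τ)) with hΦ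
  have hM0 : ∀ τ, HasDerivAt (fun τ => -(Li * E τ)) (E τ) τ := by
    intro τ
    have := ((hE τ).const_mul Li).neg
    have he : -(Li * -(L * E τ)) = E τ := by
      rw [mul_neg, neg_neg, ← mul_assoc, hinv, one_mul]
    rwa [he] at this
  have hM1 : ∀ τ, HasDerivAt (fun τ => -(((τ - s) • Li + Li ^ 2) * E τ))
      ((τ - s) • E τ) τ := by
    intro τ
    have hg : HasDerivAt (fun τ : ℝ => (τ - s) • Li + Li ^ 2) Li τ := by
      have := (((hasDerivAt_id τ).sub_const s).smul_const Li).add_const (Li ^ 2)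
      simp only [id, one_smul] at this
      exact this
    have := (hg.mul (hE τ)).neg
    have e1 : Li * (L * E τ) = E τ := by rw [← mul_assoc, hinv, one_mul]
    have he : -(Li * E τ + ((τ - s) • Li + Li ^ 2) * -(L * E τ)) = (τ - s) • E τ := by
      simp only [mul_neg, add_mul, smul_mul_assoc, pow_two, mul_assoc]
      rw [e1]
      abel
    rwa [he] at this
  have hΦderiv : ∀ τ : ℝ, HasDerivAt Φ
      ((E τ).mulVec (G₀ + ((τ - s) / Δt) • d)) τ := by
    intro τ
    have h0 : HasDerivAt (fun τ => mulV G₀ (-(Li * E τ))) ((E τ).mulVec G₀) τ := by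
      have := (mulV G₀).hasFDerivAt.comp_hasDerivAt τ (hM0 τ)
      exact this
    have h1 : HasDerivAt (fun τ => Δt⁻¹ • mulV d (-(((τ - s) • Li + Li ^ 2) * E τ)))
        (((τ - s) / Δt) • (E τ).mulVec d) τ := by
      have := ((mulV d).hasFDerivAt.comp_hasDerivAt τ (hM1 τ)).const_smul (Δt⁻¹ : ℝ)
      have he : Δt⁻¹ • mulV d ((τ - s) • E τ) = ((τ - s) / Δt) • (E τ).mulVec d := by
        rw [mulV_apply, Matrix.smul_mulVec, smul_smul, div_eq_inv_mul]
      exact this.congr_deriv he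
    have := h0.add h1
    have he : (E τ).mulVec G₀ + ((τ - s) / Δt) • (E τ).mulVec d
        = (E τ).mulVec (G₀ + ((τ - s) / Δt) • d) := by
      rw [Matrix.mulVec_add, Matrix.mulVec_smul]
    rwa [he] at this
  -- integrability
  have hcont : Continuous fun τ => (E τ).mulVec (G₀ + ((τ - s) / Δt) • d) := by
    apply hEcont.matrix_mulVec
    fun_prop
  have hint : (∫ τ in s..(s + Δt), (E τ).mulVec (G₀ + ((τ - s) / Δt) • d))
      = Φ (s + Δt) - Φ s :=
    intervalIntegral.integral_eq_sub_of_hasDerivAt (fun τ _ => hΦderiv τ)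
      (hcont.intervalIntegrable s (s + Δt))
  have hstep : (∫ τ in s..(s + Δt), (exp ((s - τ) • L)).mulVec
      (G₀ + ((τ - s) / Δt) • d)) = Φ (s + Δt) - Φ s := by
    rw [← hexp]; exact hint
  rw [hstep]
  -- final algebra
  have htne : (Δt : ℂ) ≠ 0 := by exact_mod_cast hΔt.ne'
  have hsm : ∀ (r : ℝ) (M : Matrix n n ℂ), r • M = (r : ℂ) • M := by
    intro r M; ext i j
    simp [Matrix.smul_apply, Complex.real_smul]
  have hLtinv : Lt⁻¹ = (Δt : ℂ)⁻¹ • Li := by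
    rw [hLt, hsm]
    refine Matrix.inv_eq_left_inv ?_
    rw [smul_mul_assoc, mul_smul_comm, smul_smul, inv_mul_cancel₀ htne, one_smul, hinv]
  have eL : Li ^ 2 * L = Li := by rw [pow_two, mul_assoc, hinv, mul_one]
  set Eb := exp (-Lt) with hEbdef
  have e2 : Li ^ 2 * (L * Eb) = Li * Eb := by rw [← mul_assoc, eL]
  have hEb : E (s + Δt) = Eb := by
    show exp ((s - (s + Δt)) • L) = Eb
    rw [hexp, show s - (s + Δt) = -Δt by ring, hEbdef, hLt, neg_smul]
  have hE0 : E s = 1 := by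
    show exp ((s - s) • L) = 1
    rw [sub_self, zero_smul, exp_zero]
  have h1 : Φ (s + Δt) = mulV G₀ (-(Li * Eb))
      + Δt⁻¹ • mulV d (-((Δt • Li + Li ^ 2) * Eb)) := by
    show mulV G₀ (-(Li * E (s + Δt)))
      + Δt⁻¹ • mulV d (-(((s + Δt - s) • Li + Li ^ 2) * E (s + Δt))) = _
    rw [hEb, add_sub_cancel_left]
  have h0 : Φ s = mulV G₀ (-Li) + Δt⁻¹ • mulV d (-(Li ^ 2)) := by
    show mulV G₀ (-(Li * E s))
      + Δt⁻¹ • mulV d (-(((s - s) • Li + Li ^ 2) * E s)) = _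
    rw [hE0, mul_one, mul_one, sub_self, zero_smul, zero_add]
  have hdiff : Φ (s + Δt) - Φ s = (Li - Li * Eb).mulVec G₀
      + (Δt⁻¹ • (Li ^ 2 - (Δt • Li + Li ^ 2) * Eb)).mulVec d := by
    rw [h1, h0, Matrix.smul_mulVec, ← mulV_apply d, ← mulV_apply G₀]
    rw [← neg_sub_neg (Li * Eb) Li, ← neg_sub_neg ((Δt • Li + Li ^ 2) * Eb) (Li ^ 2)]
    rw [map_sub, map_sub, smul_sub]
    abel
  rw [hdiff]
  have hBT : B = Δt⁻¹ • (Li ^ 2 - (Δt • Li + Li ^ 2) * Eb) := by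
    rw [hB, hLtinv, hLt]
    simp only [hsm, Complex.ofReal_inv]
    rw [smul_pow, smul_mul_assoc]
    rw [mul_sub, mul_sub, mul_one, smul_mul_assoc, mul_smul_comm, e2]
    rw [add_mul, smul_mul_assoc]
    match_scalars <;> field_simp <;> ring
  have hABS : A + B = Li - Li * Eb := by
    rw [hA, hBT, hLtinv, hLt]
    simp only [hsm, Complex.ofReal_inv]
    rw [smul_pow, smul_mul_assoc]
    rw [mul_sub, mul_add, mul_one, mul_smul_comm, eL]
    rw [add_mul, smul_mul_assoc]
    match_scalars <;> field_simp <;> ring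
  rw [← hABS, ← hBT, hd, Matrix.add_mulVec, Matrix.mulVec_sub]
  abel
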